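/- Let M(t) = Σ_{ν≥1} (1/(16c)) (ct)^ν/ν² be a formal power series with positive constant c. Then coefficientwise, M(t)² is dominated by (1/c)·M(t), i.e., every coefficient of M(t)² is at most the corresponding coefficient of (1/c)·M(t). -/

import Mathlib

/-- The coefficients of the power series `M(t) = Σ_{ν≥1} (1/(16c)) (ct)^ν / ν²`. -/
noncomputable def Mcoef (c : ℝ) (ν : ℕ) : ℝ :=
  if ν = 0 then 0 else (1 / (16 * c)) * c ^ ν / (ν : ℝ) ^ 2

noncomputable def aSq : ℕ → ℝ := fun i => if i = 0 then 0 else ((i : ℝ) ^ 2)⁻¹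

lemma aSq_nonneg (i : ℕ) : 0 ≤ aSq i := by
  unfold aSq; split <;> positivity

lemma sum_aSq_aux (n : ℕ) : ∑ i ∈ Finset.range (n + 2), aSq i ≤ 2 - ((n : ℝ) + 1)⁻¹ := by
  induction n with
  | zero => norm_num [aSq, Finset.sum_range_succ]
  | succ n ih =>
    rw [Finset.sum_range_succ]
    have h1 : aSq (n + 2) = (((n : ℝ) + 2) ^ 2)⁻¹ := by
      simp [aSq]
    have h2 : (((n : ℝ) + 2) ^ 2)⁻¹ ≤ ((n : ℝ) + 1)⁻¹ - ((n : ℝ) + 2)⁻¹ := by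
      rw [inv_sub_inv (by positivity) (by positivity)]
      rw [div_eq_mul_inv]
      have : ((n:ℝ)+2-((n:ℝ)+1)) = 1 := by ring
      rw [show ((n:ℝ)+2)-((n:ℝ)+1) = 1 by ring, one_mul]
      apply inv_anti₀ (by positivity)
      nlinarith [n.cast_nonneg (α := ℝ)]
    push_cast
    rw [show ((n:ℝ) + 1 + 1) = (n:ℝ) + 2 from by ring]
    linarith [ih, h2, h1.le, h1.ge]

lemma sum_aSq_le (m : ℕ) : ∑ i ∈ Finset.range m, aSq i ≤ 2 := by
  match m with
  | 0 => simp
  | 1 => simp [aSq]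
  | (n + 2) =>
    have := sum_aSq_aux n
    have : (0:ℝ) < (n:ℝ) + 1 := by positivity
    have h := sum_aSq_aux n
    nlinarith [inv_pos.mpr this]

lemma key_ineq (x y : ℝ) (hx : 0 < x) (hy : 0 < y) :
    (x ^ 2 * y ^ 2)⁻¹ ≤ 2 / (x + y) ^ 2 * ((x ^ 2)⁻¹ + (y ^ 2)⁻¹) := by
  have h : (x + y) ^ 2 ≤ 2 * (x ^ 2 + y ^ 2) := by nlinarith [sq_nonneg (x - y)]
  have h2 : (x ^ 2)⁻¹ + (y ^ 2)⁻¹ = (x ^ 2 + y ^ 2) / (x ^ 2 * y ^ 2) := by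
    field_simp
    ring
  rw [inv_eq_one_div, h2, div_mul_div_comm, div_le_div_iff₀ (by positivity) (by positivity)]
  nlinarith [mul_le_mul_of_nonneg_right h (by positivity : (0:ℝ) ≤ x ^ 2 * y ^ 2)]

/-- Coefficientwise, `M(t)²` is dominated by `(1/c)·M(t)`: every coefficient of `M(t)²`
(the `k`-th coefficient being the convolution `Σ_{i+j=k} M_i M_j`) is at most the
corresponding coefficient of `(1/c)·M(t)`. -/
theorem Msq_dominated (c : ℝ) (hc : 0 < c) (k : ℕ) :
    (∑ p ∈ Finset.HasAntidiagonal.antidiagonal k, Mcoef c p.1 * Mcoef c p.2) ≤ (1 / c) * Mcoef c k := by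
  rcases Nat.eq_zero_or_pos k with hk | hk
  · subst hk; simp [Mcoef]
  have hk0 : (k : ℝ) ≠ 0 := Nat.cast_ne_zero.mpr hk.ne'
  have hkpos : (0:ℝ) < (k:ℝ) := by positivity
  set C : ℝ := (1 / (16 * c)) ^ 2 * c ^ k * (2 / (k : ℝ) ^ 2) with hC
  have hCpos : 0 < C := by positivity
  rw [Finset.Nat.sum_antidiagonal_eq_sum_range_succ_mk]
  have step1 : ∀ i ∈ Finset.range (k + 1),
      Mcoef c i * Mcoef c (k - i) ≤ C * (aSq i + aSq (k - i)) := by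
    intro i hi
    rw [Finset.mem_range] at hi
    rcases eq_or_ne i 0 with h0 | h0
    · subst h0
      have hz : Mcoef c 0 = 0 := by simp [Mcoef]
      rw [hz, zero_mul]
      exact mul_nonneg hCpos.le (add_nonneg (aSq_nonneg _) (aSq_nonneg _))
    rcases eq_or_ne (k - i) 0 with h1 | h1
    · have hz : Mcoef c (k - i) = 0 := by simp [Mcoef, h1]
      rw [hz, mul_zero]
      exact mul_nonneg hCpos.le (add_nonneg (aSq_nonneg _) (aSq_nonneg _))
    have hik : i ≤ k := Nat.lt_succ_iff.mp hi
    have hsum : (i : ℝ) + ((k - i : ℕ) : ℝ) = (k : ℝ) := by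
      push_cast [Nat.cast_sub hik]; ring
    have hipos : (0:ℝ) < (i : ℝ) := by positivity
    have hi0 : (0:ℝ) < (i:ℝ) := by
      exact_mod_cast Nat.pos_of_ne_zero h0
    have hj0 : (0:ℝ) < ((k - i : ℕ) : ℝ) := by
      exact_mod_cast Nat.pos_of_ne_zero h1
    simp only [Mcoef, if_neg h0, if_neg h1, aSq]
    have hpow : c ^ i * c ^ (k - i) = c ^ k := by
      rw [← pow_add, Nat.add_sub_cancel' hik]
    have key := key_ineq (i : ℝ) ((k - i : ℕ) : ℝ) hi0 hj0
    rw [hsum] at key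
    calc 1 / (16 * c) * c ^ i / (i : ℝ) ^ 2 * (1 / (16 * c) * c ^ (k - i) / ((k - i : ℕ) : ℝ) ^ 2)
        = (1 / (16 * c)) ^ 2 * c ^ k * ((i : ℝ) ^ 2 * ((k - i : ℕ) : ℝ) ^ 2)⁻¹ := by
          rw [← hpow]; field_simp
      _ ≤ (1 / (16 * c)) ^ 2 * c ^ k * (2 / (k : ℝ) ^ 2 * (((i : ℝ) ^ 2)⁻¹ + (((k - i : ℕ) : ℝ) ^ 2)⁻¹)) := by
          apply mul_le_mul_of_nonneg_left key (by positivity)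
      _ = C * (((i : ℝ) ^ 2)⁻¹ + (((k - i : ℕ) : ℝ) ^ 2)⁻¹) := by rw [hC]; ring
  calc (∑ i ∈ Finset.range (k + 1), Mcoef c i * Mcoef c (k - i))
      ≤ ∑ i ∈ Finset.range (k + 1), C * (aSq i + aSq (k - i)) := Finset.sum_le_sum step1
    _ = C * ((∑ i ∈ Finset.range (k + 1), aSq i) + ∑ i ∈ Finset.range (k + 1), aSq (k - i)) := by
        rw [← Finset.mul_sum, Finset.sum_add_distrib]
    _ = C * (2 * ∑ i ∈ Finset.range (k + 1), aSq i) := by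
        have : ∑ i ∈ Finset.range (k + 1), aSq (k - i) = ∑ i ∈ Finset.range (k + 1), aSq i := by
          have := Finset.sum_range_reflect (fun i => aSq i) (k + 1)
          simpa using this
        rw [this]; ring
    _ ≤ C * (2 * 2) := by
        apply mul_le_mul_of_nonneg_left _ hCpos.le
        have := sum_aSq_le (k + 1)
        linarith
    _ ≤ (1 / c) * Mcoef c k := by
        simp only [Mcoef, if_neg hk.ne']
        rw [hC]
        have hck : 0 < c ^ k := by positivity
        have hcalc : (1 / c) * (1 / (16 * c) * c ^ k / (k : ℝ) ^ 2) -
            (1 / (16 * c)) ^ 2 * c ^ k * (2 / (k : ℝ) ^ 2) * (2 * 2)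
            = c ^ k / (32 * c ^ 2 * (k : ℝ) ^ 2) := by
          field_simp
          ring
        have hnn : (0:ℝ) ≤ c ^ k / (32 * c ^ 2 * (k : ℝ) ^ 2) := by positivity
        linarith
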